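/- Let A be a commutative ring, P ∈ A[X] a polynomial, and B = A[X]/(P). Let f ∈ B denote the image of X and assume P'(f) is a unit in B. Then every derivation d: A → A extends uniquely to a derivation D: B → B satisfying D(a·1) = d(a)·1 for all a ∈ A; necessarily D(f) = −P'(f)⁻¹·Pᵈ(f), where Pᵈ is the coefficient-wise application of d to P. -/

import Mathlib

open Polynomial

section Aux
variable {A : Type*} [CommRing A]

noncomputable def mapd (d : A → A) (Q : Polynomial A) : Polynomial A :=
  Q.sum fun n a => C (d a) * X ^ n

variable {d : A → A}

lemma d_zero (hadd : ∀ x y : A, d (x + y) = d x + d y) : d 0 = 0 := by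
  have h := hadd 0 0
  simp only [add_zero] at h
  exact (left_eq_add.mp h)

lemma d_one (hleib : ∀ x y : A, d (x * y) = x * d y + d x * y) : d 1 = 0 := by
  have h := hleib 1 1
  simp only [one_mul, mul_one] at h
  exact (left_eq_add.mp h)

lemma d_sum (hadd : ∀ x y : A, d (x + y) = d x + d y)
    {ι : Type*} (s : Finset ι) (g : ι → A) :
    d (∑ i ∈ s, g i) = ∑ i ∈ s, d (g i) := by
  classical
  induction s using Finset.induction_on with
  | empty => simpa using d_zero hadd
  | insert _ _ hx ih => rw [Finset.sum_insert hx, Finset.sum_insert hx, hadd, ih]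

lemma coeff_mapd (hadd : ∀ x y : A, d (x + y) = d x + d y)
    (Q : Polynomial A) (k : ℕ) : (mapd d Q).coeff k = d (Q.coeff k) := by
  classical
  rw [mapd, Polynomial.sum, finset_sum_coeff]
  simp only [coeff_C_mul, coeff_X_pow, mul_ite, mul_one, mul_zero]
  by_cases hk : k ∈ Q.support
  · rw [Finset.sum_eq_single k]
    · simp
    · intro b _ hbk; simp [Ne.symm hbk]
    · intro h; exact absurd hk h
  · rw [Finset.sum_eq_zero]
    · rw [Polynomial.notMem_support_iff.mp hk, d_zero hadd]
    · intro b hb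
      have : k ≠ b := fun h => hk (h ▸ hb)
      simp [this]

lemma mapd_add (hadd : ∀ x y : A, d (x + y) = d x + d y)
    (Q R : Polynomial A) : mapd d (Q + R) = mapd d Q + mapd d R := by
  ext k; simp [coeff_mapd hadd, hadd]

lemma mapd_C (hadd : ∀ x y : A, d (x + y) = d x + d y) (a : A) :
    mapd d (C a) = C (d a) := by
  ext k
  rw [coeff_mapd hadd, coeff_C, coeff_C]
  split
  · rfl
  · exact d_zero hadd

lemma mapd_X (hadd : ∀ x y : A, d (x + y) = d x + d y)
    (hleib : ∀ x y : A, d (x * y) = x * d y + d x * y) :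
    mapd d (X : Polynomial A) = 0 := by
  ext k
  rw [coeff_mapd hadd, coeff_X]
  split
  · exact d_one hleib
  · exact (d_zero hadd).trans rfl

lemma mapd_mul (hadd : ∀ x y : A, d (x + y) = d x + d y)
    (hleib : ∀ x y : A, d (x * y) = x * d y + d x * y)
    (Q R : Polynomial A) :
    mapd d (Q * R) = Q * mapd d R + mapd d Q * R := by
  ext k
  rw [coeff_mapd hadd, coeff_add, coeff_mul, coeff_mul, coeff_mul,
    d_sum hadd, ← Finset.sum_add_distrib]
  refine Finset.sum_congr rfl fun x _ => ?_
  rw [hleib, coeff_mapd hadd, coeff_mapd hadd]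

end Aux

lemma key {A : Type*} [CommRing A] {d : A → A}
    (hadd : ∀ x y : A, d (x + y) = d x + d y)
    (hleib : ∀ x y : A, d (x * y) = x * d y + d x * y)
    (P : Polynomial A)
    (D : (Polynomial A ⧸ Ideal.span {P}) → (Polynomial A ⧸ Ideal.span {P}))
    (h1 : ∀ x y, D (x + y) = D x + D y)
    (h2 : ∀ x y, D (x * y) = x * D y + D x * y)
    (h3 : ∀ a : A, D (algebraMap A (Polynomial A ⧸ Ideal.span {P}) a) =
      algebraMap A (Polynomial A ⧸ Ideal.span {P}) (d a))
    (Q : Polynomial A) :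
    D (Ideal.Quotient.mk (Ideal.span {P}) Q) =
      Ideal.Quotient.mk (Ideal.span {P}) (mapd d Q) +
        Ideal.Quotient.mk (Ideal.span {P}) Q.derivative *
          D (Ideal.Quotient.mk (Ideal.span {P}) X) := by
  set π := Ideal.Quotient.mk (Ideal.span {P}) with hπ
  induction Q using Polynomial.induction_on with
  | C a =>
      have := h3 a
      rw [show algebraMap A (Polynomial A ⧸ Ideal.span {P}) a = π (C a) from rfl,
        show algebraMap A (Polynomial A ⧸ Ideal.span {P}) (d a) = π (C (d a)) from rfl] at this
      rw [this, mapd_C hadd, derivative_C]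
      simp
  | add p q hp hq =>
      rw [map_add, h1, hp, hq, mapd_add hadd, derivative_add, map_add, map_add]
      ring
  | monomial n a ih =>
      have hrw : (C a : Polynomial A) * X ^ (n + 1) = (C a * X ^ n) * X := by
        rw [pow_succ, mul_assoc]
      rw [hrw, map_mul, h2, ih, mapd_mul hadd hleib (C a * X ^ n) X, mapd_X hadd hleib,
        derivative_mul (f := C a * X ^ n), derivative_X]
      simp only [map_add, map_mul, mul_zero, zero_add, mul_one]
      ring


set_option maxHeartbeats 1000000 in
theorem stmt_13 (A : Type*) [CommRing A] (P : Polynomial A)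
    (hP : IsUnit (Polynomial.aeval
      (Ideal.Quotient.mk (Ideal.span {P}) Polynomial.X) (Polynomial.derivative P)))
    (d : A → A)
    (hadd : ∀ x y : A, d (x + y) = d x + d y)
    (hleib : ∀ x y : A, d (x * y) = x * d y + d x * y) :
    (∃! D : (Polynomial A ⧸ Ideal.span {P}) → (Polynomial A ⧸ Ideal.span {P}),
      (∀ x y, D (x + y) = D x + D y) ∧
      (∀ x y, D (x * y) = x * D y + D x * y) ∧
      (∀ a : A, D (algebraMap A (Polynomial A ⧸ Ideal.span {P}) a) =
        algebraMap A (Polynomial A ⧸ Ideal.span {P}) (d a))) ∧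
    (∀ D : (Polynomial A ⧸ Ideal.span {P}) → (Polynomial A ⧸ Ideal.span {P}),
      ((∀ x y, D (x + y) = D x + D y) ∧
       (∀ x y, D (x * y) = x * D y + D x * y) ∧
       (∀ a : A, D (algebraMap A (Polynomial A ⧸ Ideal.span {P}) a) =
         algebraMap A (Polynomial A ⧸ Ideal.span {P}) (d a))) →
      D (Ideal.Quotient.mk (Ideal.span {P}) Polynomial.X) =
        -((↑hP.unit⁻¹ : Polynomial A ⧸ Ideal.span {P}) *
          P.sum (fun n a => algebraMap A (Polynomial A ⧸ Ideal.span {P}) (d a) *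
            (Ideal.Quotient.mk (Ideal.span {P}) Polynomial.X) ^ n))) := by
  classical
  set π := Ideal.Quotient.mk (Ideal.span {P}) with hπdef
  -- aeval at the class of X is just the quotient map
  have haev : ∀ Q : Polynomial A, Polynomial.aeval (π X) Q = π Q := by
    intro Q
    rw [show π X = (Ideal.Quotient.mkₐ A (Ideal.span {P})) X from rfl,
      Polynomial.aeval_algHom_apply, Polynomial.aeval_X_left_apply, Ideal.Quotient.mkₐ_eq_mk]
  have halg : ∀ a : A, algebraMap A (Polynomial A ⧸ Ideal.span {P}) a = π (C a) :=
    fun a => rfl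
  have hm : π (mapd d P) = P.sum (fun n a => algebraMap A (Polynomial A ⧸ Ideal.span {P}) (d a) *
      (π X) ^ n) := by
    rw [mapd, Polynomial.sum, map_sum, Polynomial.sum]
    refine Finset.sum_congr rfl fun n _ => ?_
    rw [map_mul, map_pow]
    rfl
  have hu1 : π (derivative P) * (↑hP.unit⁻¹ : Polynomial A ⧸ Ideal.span {P}) = 1 := by
    rw [← haev]; exact hP.mul_val_inv
  set c : Polynomial A ⧸ Ideal.span {P} :=
    -((↑hP.unit⁻¹ : Polynomial A ⧸ Ideal.span {P}) * π (mapd d P)) with hcdef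
  set Dfun : Polynomial A → Polynomial A ⧸ Ideal.span {P} :=
    fun Q => π (mapd d Q) + π Q.derivative * c with hDfundef
  have hDfun_add : ∀ Q R, Dfun (Q + R) = Dfun Q + Dfun R := by
    intro Q R
    simp only [hDfundef, mapd_add hadd, derivative_add, map_add]
    ring
  have hDfun_mul : ∀ Q R, Dfun (Q * R) = π Q * Dfun R + Dfun Q * π R := by
    intro Q R
    simp only [hDfundef, mapd_mul hadd hleib, derivative_mul, map_add, map_mul]
    ring
  have hDfunP : Dfun P = 0 := by
    simp only [hDfundef, hcdef]
    linear_combination (-(π (mapd d P))) * hu1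
  have hπP : π P = 0 := by
    rw [Ideal.Quotient.eq_zero_iff_mem]
    exact Ideal.mem_span_singleton_self P
  have wd : ∀ Q R : Polynomial A, π Q = π R → Dfun Q = Dfun R := by
    intro Q R h
    rw [Ideal.Quotient.eq] at h
    obtain ⟨S, hS⟩ := Ideal.mem_span_singleton'.mp h
    have hQ : Q = R + S * P := by linear_combination hS.symm
    rw [hQ, hDfun_add, hDfun_mul, hDfunP, hπP]
    ring
  have hsurj : Function.Surjective π := Ideal.Quotient.mk_surjective
  set D : (Polynomial A ⧸ Ideal.span {P}) → (Polynomial A ⧸ Ideal.span {P}) :=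
    fun b => Dfun (hsurj b).choose with hDdef
  have hD : ∀ Q : Polynomial A, D (π Q) = Dfun Q :=
    fun Q => wd _ _ ((hsurj (π Q)).choose_spec)
  have hax1 : ∀ x y, D (x + y) = D x + D y := by
    intro x y
    obtain ⟨q, rfl⟩ := hsurj x
    obtain ⟨r, rfl⟩ := hsurj y
    rw [← map_add, hD, hD, hD, hDfun_add]
  have hax2 : ∀ x y, D (x * y) = x * D y + D x * y := by
    intro x y
    obtain ⟨q, rfl⟩ := hsurj x
    obtain ⟨r, rfl⟩ := hsurj y
    rw [← map_mul, hD, hD, hD, hDfun_mul]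
  have hax3 : ∀ a : A, D (algebraMap A (Polynomial A ⧸ Ideal.span {P}) a) =
      algebraMap A (Polynomial A ⧸ Ideal.span {P}) (d a) := by
    intro a
    rw [halg, halg, hD, hDfundef]
    simp only [mapd_C hadd, derivative_C, map_zero, zero_mul, add_zero]
  -- any derivation satisfying the axioms sends π X to c
  have keyX : ∀ D' : (Polynomial A ⧸ Ideal.span {P}) → (Polynomial A ⧸ Ideal.span {P}),
      ((∀ x y, D' (x + y) = D' x + D' y) ∧
       (∀ x y, D' (x * y) = x * D' y + D' x * y) ∧
       (∀ a : A, D' (algebraMap A (Polynomial A ⧸ Ideal.span {P}) a) =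
         algebraMap A (Polynomial A ⧸ Ideal.span {P}) (d a))) → D' (π X) = c := by
    rintro D' ⟨h1, h2, h3⟩
    have hk := key hadd hleib P D' h1 h2 h3 P
    rw [hπP] at hk
    have hD0 : D' 0 = 0 := by
      have h := h1 0 0
      rw [add_zero] at h
      exact (left_eq_add.mp h)
    rw [hD0] at hk
    have hthis : π (derivative P) * D' (π X) = -(π (mapd d P)) := by
      linear_combination -hk
    rw [hcdef]
    linear_combination (↑hP.unit⁻¹ : Polynomial A ⧸ Ideal.span {P}) * hthis +
      (-(D' (π X))) * hu1
  refine ⟨⟨D, ⟨hax1, hax2, hax3⟩, ?_⟩, ?_⟩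
  · rintro D' ⟨h1, h2, h3⟩
    funext b
    obtain ⟨q, rfl⟩ := hsurj b
    rw [key hadd hleib P D' h1 h2 h3 q, key hadd hleib P D hax1 hax2 hax3 q,
      keyX D' ⟨h1, h2, h3⟩, keyX D ⟨hax1, hax2, hax3⟩]
  · intro D' hD'
    rw [keyX D' hD', hcdef, hm]
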